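/- Let x̄ ∈ F be a locally optimal solution of (MPSC). Assume that x̄ is an S-stationary point of (MPSC) and that MPSC-WSOCQ holds at x̄. Then MPSC-WSONC holds at x̄: for every multiplier vector (λ, ρ, μ, ν) satisfying the S-stationarity system at x̄ and every d̃ ∈ C̃^MPSC_F(x̄), one has d̃ᵀ∇²ℓ(x̄)d̃ ≥ 0, where ℓ := f + Σ_i λ_i g_i + Σ_j ρ_j h_j + Σ_k μ_k G_k + Σ_k ν_k H_k. -/

import Mathlib

open Set Filter Topology Metric

noncomputable section

namespace MPSC

abbrev Vec (n : ℕ) := EuclideanSpace ℝ (Fin n)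

variable {n m p l : ℕ}

open scoped Classical in
/-- Sum of a function over an index set (finite ambient type). -/
noncomputable def sumOver {α β : Type*} [Fintype α] [AddCommMonoid β]
    (S : Set α) (v : α → β) : β :=
  ∑ a, if a ∈ S then v a else 0

/-- The feasible set of (MPSC). -/
def Feas (g : Fin m → Vec n → ℝ) (h : Fin p → Vec n → ℝ)
    (G H : Fin l → Vec n → ℝ) : Set (Vec n) :=
  {x | (∀ i, g i x ≤ 0) ∧ (∀ j, h j x = 0) ∧ ∀ k, G k x * H k x = 0}

/-- Index set of active inequality constraints. -/
def Ig (g : Fin m → Vec n → ℝ) (xb : Vec n) : Set (Fin m) := {i | g i xb = 0}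

def IG (G H : Fin l → Vec n → ℝ) (xb : Vec n) : Set (Fin l) :=
  {k | G k xb = 0 ∧ H k xb ≠ 0}

def IH (G H : Fin l → Vec n → ℝ) (xb : Vec n) : Set (Fin l) :=
  {k | G k xb ≠ 0 ∧ H k xb = 0}

def IGH (G H : Fin l → Vec n → ℝ) (xb : Vec n) : Set (Fin l) :=
  {k | G k xb = 0 ∧ H k xb = 0}

/-- (β1, β2) is a disjoint bipartition of I_GH. -/
def Partition (G H : Fin l → Vec n → ℝ) (xb : Vec n) (β1 β2 : Set (Fin l)) : Prop :=
  β1 ∩ β2 = ∅ ∧ β1 ∪ β2 = IGH G H xb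

/-- Branch feasible set. -/
def BranchFeas (g : Fin m → Vec n → ℝ) (h : Fin p → Vec n → ℝ)
    (G H : Fin l → Vec n → ℝ) (xb : Vec n) (β1 β2 : Set (Fin l)) : Set (Vec n) :=
  {x | (∀ i, g i x ≤ 0) ∧ (∀ j, h j x = 0) ∧
    (∀ k ∈ IG G H xb ∪ β1, G k x = 0) ∧ ∀ k ∈ IH G H xb ∪ β2, H k x = 0}

/-- Bouligand tangent cone, as defined in the paper. -/
def tangentCone (Ω : Set (Vec n)) (xb : Vec n) : Set (Vec n) :=
  {d | ∃ t : ℕ → ℝ, ∃ x : ℕ → Vec n, (∀ k, 0 ≤ t k) ∧ (∀ k, x k ∈ Ω) ∧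
    Tendsto x atTop (nhds xb) ∧ Tendsto (fun k => t k • (x k - xb)) atTop (nhds d)}

/-- MPSC linearization cone. -/
def LCone (g : Fin m → Vec n → ℝ) (h : Fin p → Vec n → ℝ)
    (G H : Fin l → Vec n → ℝ) (xb : Vec n) : Set (Vec n) :=
  {d | (∀ i ∈ Ig g xb, fderiv ℝ (g i) xb d ≤ 0) ∧ (∀ j, fderiv ℝ (h j) xb d = 0) ∧
    (∀ k ∈ IG G H xb, fderiv ℝ (G k) xb d = 0) ∧ (∀ k ∈ IH G H xb, fderiv ℝ (H k) xb d = 0) ∧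
    ∀ k ∈ IGH G H xb, fderiv ℝ (G k) xb d * fderiv ℝ (H k) xb d = 0}

/-- Branch linearization cone. -/
def BranchLCone (g : Fin m → Vec n → ℝ) (h : Fin p → Vec n → ℝ)
    (G H : Fin l → Vec n → ℝ) (xb : Vec n) (β1 β2 : Set (Fin l)) : Set (Vec n) :=
  {d | (∀ i ∈ Ig g xb, fderiv ℝ (g i) xb d ≤ 0) ∧ (∀ j, fderiv ℝ (h j) xb d = 0) ∧
    (∀ k ∈ IG G H xb ∪ β1, fderiv ℝ (G k) xb d = 0) ∧
    ∀ k ∈ IH G H xb ∪ β2, fderiv ℝ (H k) xb d = 0}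

/-- MPSC critical subspace. -/
def CritSubspace (g : Fin m → Vec n → ℝ) (h : Fin p → Vec n → ℝ)
    (G H : Fin l → Vec n → ℝ) (xb : Vec n) : Set (Vec n) :=
  {d | (∀ i ∈ Ig g xb, fderiv ℝ (g i) xb d = 0) ∧ (∀ j, fderiv ℝ (h j) xb d = 0) ∧
    (∀ k ∈ IG G H xb ∪ IGH G H xb, fderiv ℝ (G k) xb d = 0) ∧
    ∀ k ∈ IH G H xb ∪ IGH G H xb, fderiv ℝ (H k) xb d = 0}

/-- Rank (dimension of the span) of the family of gradients
{∇g_i(x)}_{i∈I1} ∪ {∇h_j(x)}_j ∪ {∇G_k(x)}_{k∈I3} ∪ {∇H_k(x)}_{k∈I4}. -/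
def gradRank (g : Fin m → Vec n → ℝ) (h : Fin p → Vec n → ℝ)
    (G H : Fin l → Vec n → ℝ) (I1 : Set (Fin m)) (I3 I4 : Set (Fin l)) (x : Vec n) : ℕ :=
  Module.finrank ℝ ↥(Submodule.span ℝ
    ((fun i => gradient (g i) x) '' I1 ∪ Set.range (fun j => gradient (h j) x) ∪
     (fun k => gradient (G k) x) '' I3 ∪ (fun k => gradient (H k) x) '' I4))

/-- MPSC-LICQ. -/
def LICQ (g : Fin m → Vec n → ℝ) (h : Fin p → Vec n → ℝ)
    (G H : Fin l → Vec n → ℝ) (xb : Vec n) : Prop :=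
  ∀ (lam : Fin m → ℝ) (ρ : Fin p → ℝ) (μ ν : Fin l → ℝ),
    (∀ i, i ∉ Ig g xb → lam i = 0) →
    (∀ k, k ∉ IG G H xb ∪ IGH G H xb → μ k = 0) →
    (∀ k, k ∉ IH G H xb ∪ IGH G H xb → ν k = 0) →
    ∑ i, lam i • gradient (g i) xb + ∑ j, ρ j • gradient (h j) xb +
      ∑ k, μ k • gradient (G k) xb + ∑ k, ν k • gradient (H k) xb = 0 →
    lam = 0 ∧ ρ = 0 ∧ μ = 0 ∧ ν = 0

/-- MPSC-RCRCQ. -/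
def RCRCQ (g : Fin m → Vec n → ℝ) (h : Fin p → Vec n → ℝ)
    (G H : Fin l → Vec n → ℝ) (xb : Vec n) : Prop :=
  ∃ ε > (0:ℝ), ∀ I1 : Set (Fin m), I1 ⊆ Ig g xb →
    ∀ I3 I4 : Set (Fin l), I3 ⊆ IGH G H xb → I4 ⊆ IGH G H xb →
      ∀ x : Vec n, ‖x - xb‖ < ε →
        gradRank g h G H I1 (I3 ∪ IG G H xb) (I4 ∪ IH G H xb) x =
        gradRank g h G H I1 (I3 ∪ IG G H xb) (I4 ∪ IH G H xb) xb

/-- MPSC-WCR. -/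
def WCR (g : Fin m → Vec n → ℝ) (h : Fin p → Vec n → ℝ)
    (G H : Fin l → Vec n → ℝ) (xb : Vec n) : Prop :=
  ∃ ε > (0:ℝ), ∀ x : Vec n, ‖x - xb‖ < ε →
    gradRank g h G H (Ig g xb) (IG G H xb ∪ IGH G H xb) (IH G H xb ∪ IGH G H xb) x =
    gradRank g h G H (Ig g xb) (IG G H xb ∪ IGH G H xb) (IH G H xb ∪ IGH G H xb) xb

/-- MPSC-PWCR. -/
def PWCR (g : Fin m → Vec n → ℝ) (h : Fin p → Vec n → ℝ)
    (G H : Fin l → Vec n → ℝ) (xb : Vec n) : Prop :=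
  ∀ β1 β2 : Set (Fin l), Partition G H xb β1 β2 →
    ∃ ε > (0:ℝ), ∀ x : Vec n, ‖x - xb‖ < ε →
      gradRank g h G H (Ig g xb) (IG G H xb ∪ β1) (IH G H xb ∪ β2) x =
      gradRank g h G H (Ig g xb) (IG G H xb ∪ β1) (IH G H xb ∪ β2) xb

/-- The index set I_g^- associated with a branch (β1, β2). -/
def IgMinus (g : Fin m → Vec n → ℝ) (h : Fin p → Vec n → ℝ)
    (G H : Fin l → Vec n → ℝ) (xb : Vec n) (β1 β2 : Set (Fin l)) : Set (Fin m) :=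
  {i | i ∈ Ig g xb ∧ ∃ (lam : Fin m → ℝ) (ρ : Fin p → ℝ) (μ ν : Fin l → ℝ),
    (∀ i', 0 ≤ lam i') ∧ (∀ i', i' ∉ Ig g xb \ {i} → lam i' = 0) ∧
    (∀ k, k ∉ IG G H xb ∪ β1 → μ k = 0) ∧ (∀ k, k ∉ IH G H xb ∪ β2 → ν k = 0) ∧
    -gradient (g i) xb = ∑ i', lam i' • gradient (g i') xb + ∑ j, ρ j • gradient (h j) xb +
      ∑ k, μ k • gradient (G k) xb + ∑ k, ν k • gradient (H k) xb}

/-- MPSC-PCRSC. -/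
def PCRSC (g : Fin m → Vec n → ℝ) (h : Fin p → Vec n → ℝ)
    (G H : Fin l → Vec n → ℝ) (xb : Vec n) : Prop :=
  ∀ β1 β2 : Set (Fin l), Partition G H xb β1 β2 →
    ∃ ε > (0:ℝ), ∀ x : Vec n, ‖x - xb‖ < ε →
      gradRank g h G H (IgMinus g h G H xb β1 β2) (IG G H xb ∪ β1) (IH G H xb ∪ β2) x =
      gradRank g h G H (IgMinus g h G H xb β1 β2) (IG G H xb ∪ β1) (IH G H xb ∪ β2) xb

/-- A twice differentiable arc on [0, δ) (one-sided at the endpoint 0),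
with first derivative ξ'. -/
def TwiceDiffArc (δ : ℝ) (ξ ξ' : ℝ → Vec n) : Prop :=
  (∀ t ∈ Ico (0:ℝ) δ, HasDerivWithinAt ξ (ξ' t) (Ico (0:ℝ) δ) t) ∧
  ∀ t ∈ Ico (0:ℝ) δ, DifferentiableWithinAt ℝ ξ' (Ico (0:ℝ) δ) t

/-- MPSC-SSOCQ. -/
def SSOCQ (g : Fin m → Vec n → ℝ) (h : Fin p → Vec n → ℝ)
    (G H : Fin l → Vec n → ℝ) (xb : Vec n) : Prop :=
  ∀ d ∈ LCone g h G H xb, d ≠ 0 →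
    ∃ δ > (0:ℝ), ∃ J K : Set (Fin l), J ⊆ IGH G H xb ∧ K ⊆ IGH G H xb ∧
      ∃ ξ ξ' : ℝ → Vec n, TwiceDiffArc δ ξ ξ' ∧
        (∀ t ∈ Ico (0:ℝ) δ, ξ t ∈ Feas g h G H) ∧
        ξ 0 = xb ∧ ξ' 0 = d ∧
        (∀ t ∈ Ico (0:ℝ) δ, ∀ i ∈ Ig g xb, fderiv ℝ (g i) xb d = 0 → g i (ξ t) = 0) ∧
        (∀ t ∈ Ico (0:ℝ) δ, ∀ k ∈ IG G H xb ∪ J, G k (ξ t) = 0) ∧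
        ∀ t ∈ Ico (0:ℝ) δ, ∀ k ∈ IH G H xb ∪ K, H k (ξ t) = 0

/-- MPSC-WSOCQ. -/
def WSOCQ (g : Fin m → Vec n → ℝ) (h : Fin p → Vec n → ℝ)
    (G H : Fin l → Vec n → ℝ) (xb : Vec n) : Prop :=
  ∀ d ∈ CritSubspace g h G H xb, d ≠ 0 →
    ∃ δ > (0:ℝ), ∃ J K : Set (Fin l), J ⊆ IGH G H xb ∧ K ⊆ IGH G H xb ∧
      ∃ ζ ζ' : ℝ → Vec n, TwiceDiffArc δ ζ ζ' ∧
        (∀ t ∈ Ico (0:ℝ) δ, ζ t ∈ Feas g h G H) ∧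
        ζ 0 = xb ∧ ζ' 0 = d ∧
        (∀ t ∈ Ico (0:ℝ) δ, ∀ i ∈ Ig g xb, g i (ζ t) = 0) ∧
        (∀ t ∈ Ico (0:ℝ) δ, ∀ k ∈ IG G H xb ∪ J, G k (ζ t) = 0) ∧
        ∀ t ∈ Ico (0:ℝ) δ, ∀ k ∈ IH G H xb ∪ K, H k (ζ t) = 0

/-- The S-stationarity system for multipliers (λ, ρ, μ, ν) at xb. -/
def SStationarySystem (f : Vec n → ℝ) (g : Fin m → Vec n → ℝ) (h : Fin p → Vec n → ℝ)
    (G H : Fin l → Vec n → ℝ) (xb : Vec n)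
    (lam : Fin m → ℝ) (ρ : Fin p → ℝ) (μ ν : Fin l → ℝ) : Prop :=
  (∀ i, 0 ≤ lam i) ∧ (∀ i, lam i * g i xb = 0) ∧
  (∀ k ∈ IH G H xb ∪ IGH G H xb, μ k = 0) ∧
  (∀ k ∈ IG G H xb ∪ IGH G H xb, ν k = 0) ∧
  gradient f xb + ∑ i, lam i • gradient (g i) xb + ∑ j, ρ j • gradient (h j) xb +
    ∑ k, μ k • gradient (G k) xb + ∑ k, ν k • gradient (H k) xb = 0

def SStationary (f : Vec n → ℝ) (g : Fin m → Vec n → ℝ) (h : Fin p → Vec n → ℝ)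
    (G H : Fin l → Vec n → ℝ) (xb : Vec n) : Prop :=
  ∃ (lam : Fin m → ℝ) (ρ : Fin p → ℝ) (μ ν : Fin l → ℝ),
    SStationarySystem f g h G H xb lam ρ μ ν

/-- The M-stationarity system for multipliers (λ, ρ, μ, ν) at xb. -/
def MStationarySystem (f : Vec n → ℝ) (g : Fin m → Vec n → ℝ) (h : Fin p → Vec n → ℝ)
    (G H : Fin l → Vec n → ℝ) (xb : Vec n)
    (lam : Fin m → ℝ) (ρ : Fin p → ℝ) (μ ν : Fin l → ℝ) : Prop :=
  (∀ i, 0 ≤ lam i) ∧ (∀ i, lam i * g i xb = 0) ∧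
  (∀ k ∈ IH G H xb, μ k = 0) ∧ (∀ k ∈ IG G H xb, ν k = 0) ∧
  (∀ k ∈ IGH G H xb, μ k * ν k = 0) ∧
  gradient f xb + ∑ i, lam i • gradient (g i) xb + ∑ j, ρ j • gradient (h j) xb +
    ∑ k, μ k • gradient (G k) xb + ∑ k, ν k • gradient (H k) xb = 0

def MStationary (f : Vec n → ℝ) (g : Fin m → Vec n → ℝ) (h : Fin p → Vec n → ℝ)
    (G H : Fin l → Vec n → ℝ) (xb : Vec n) : Prop :=
  ∃ (lam : Fin m → ℝ) (ρ : Fin p → ℝ) (μ ν : Fin l → ℝ),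
    MStationarySystem f g h G H xb lam ρ μ ν

/-- Local optimality for (MPSC). -/
def LocallyOptimal (f : Vec n → ℝ) (g : Fin m → Vec n → ℝ) (h : Fin p → Vec n → ℝ)
    (G H : Fin l → Vec n → ℝ) (xb : Vec n) : Prop :=
  xb ∈ Feas g h G H ∧ ∃ ε > (0:ℝ), ∀ x ∈ Feas g h G H, ‖x - xb‖ < ε → f xb ≤ f x

/-- Hessian quadratic form dᵀ∇²φ(x)d. -/
def hessForm (φ : Vec n → ℝ) (x d : Vec n) : ℝ :=
  iteratedFDeriv ℝ 2 φ x ![d, d]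

/-- The Lagrange function ℓ. -/
def lagr (f : Vec n → ℝ) (g : Fin m → Vec n → ℝ) (h : Fin p → Vec n → ℝ)
    (G H : Fin l → Vec n → ℝ)
    (lam : Fin m → ℝ) (ρ : Fin p → ℝ) (μ ν : Fin l → ℝ) : Vec n → ℝ :=
  fun x => f x + ∑ i, lam i * g i x + ∑ j, ρ j * h j x +
    ∑ k, μ k * G k x + ∑ k, ν k * H k x

/-- Constraint-violation residual. -/
def residual (g : Fin m → Vec n → ℝ) (h : Fin p → Vec n → ℝ)
    (G H : Fin l → Vec n → ℝ) (x : Vec n) : ℝ :=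
  Real.sqrt (∑ i, max (g i x) 0 ^ 2 + ∑ j, h j x ^ 2 + ∑ k, min (G k x ^ 2) (H k x ^ 2))

/-- Penalty function P_κ. -/
def Pen (f : Vec n → ℝ) (g : Fin m → Vec n → ℝ) (h : Fin p → Vec n → ℝ)
    (G H : Fin l → Vec n → ℝ) (κ : ℝ) (x : Vec n) : ℝ :=
  f x + κ * residual g h G H x

/-- MPSC piecewise second-order quasi-normality. -/
def PSOQN (g : Fin m → Vec n → ℝ) (h : Fin p → Vec n → ℝ)
    (G H : Fin l → Vec n → ℝ) (xb : Vec n) : Prop :=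
  ∀ β1 β2 : Set (Fin l), Partition G H xb β1 β2 →
    ¬ ∃ (lam : Fin m → ℝ) (ρ : Fin p → ℝ) (μ ν : Fin l → ℝ),
      (∀ i, 0 ≤ lam i) ∧
      (∀ k, k ∉ IG G H xb ∪ β1 → μ k = 0) ∧ (∀ k, k ∉ IH G H xb ∪ β2 → ν k = 0) ∧
      ¬(lam = 0 ∧ ρ = 0 ∧ μ = 0 ∧ ν = 0) ∧
      (∑ i, lam i • gradient (g i) xb + ∑ j, ρ j • gradient (h j) xb +
        ∑ k, μ k • gradient (G k) xb + ∑ k, ν k • gradient (H k) xb = 0) ∧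
      (∀ d : Vec n, (∀ i ∈ Ig g xb, fderiv ℝ (g i) xb d = 0) →
        (∀ j, fderiv ℝ (h j) xb d = 0) →
        (∀ k ∈ IG G H xb ∪ β1, fderiv ℝ (G k) xb d = 0) →
        (∀ k ∈ IH G H xb ∪ β2, fderiv ℝ (H k) xb d = 0) →
        0 ≤ ∑ i, lam i * hessForm (g i) xb d + ∑ j, ρ j * hessForm (h j) xb d +
          ∑ k, μ k * hessForm (G k) xb d + ∑ k, ν k * hessForm (H k) xb d) ∧
      ∃ xs : ℕ → Vec n, Tendsto xs atTop (nhds xb) ∧ ∀ s,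
        (∀ i, 0 < lam i → 0 < lam i * g i (xs s)) ∧
        (∀ j, ρ j ≠ 0 → 0 < ρ j * h j (xs s)) ∧
        (∀ k, μ k ≠ 0 → 0 < μ k * G k (xs s)) ∧
        (∀ k, ν k ≠ 0 → 0 < ν k * H k (xs s))

lemma aux_second_deriv_nonneg {δ : ℝ} (hδ : 0 < δ) {φ φ' : ℝ → ℝ} {c : ℝ}
    (hd : ∀ t ∈ Ico (0:ℝ) δ, HasDerivWithinAt φ (φ' t) (Ico (0:ℝ) δ) t)
    (h0 : φ' 0 = 0)
    (hdd : HasDerivWithinAt φ' c (Ico (0:ℝ) δ) 0)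
    (hmin : ∀ t ∈ Ico (0:ℝ) δ, φ 0 ≤ φ t) : 0 ≤ c := by
  have key : ∀ b : ℝ, 0 < b → b < δ → ∃ ξ, ξ ∈ Ioo (0:ℝ) b ∧ 0 ≤ φ' ξ := by
    intro b hb hbδ
    have hsub : Icc (0:ℝ) b ⊆ Ico (0:ℝ) δ := fun t ht => ⟨ht.1, lt_of_le_of_lt ht.2 hbδ⟩
    have hcont : ContinuousOn φ (Icc 0 b) := fun t ht =>
      ((hd t (hsub ht)).continuousWithinAt).mono hsub
    have hder : ∀ x ∈ Ioo (0:ℝ) b, HasDerivAt φ (φ' x) x := by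
      intro x hx
      exact (hd x (hsub ⟨hx.1.le, hx.2.le⟩)).hasDerivAt
        (Ico_mem_nhds hx.1 (hx.2.trans hbδ))
    obtain ⟨ξ, hξ, hval⟩ := exists_hasDerivAt_eq_slope φ φ' hb hcont hder
    refine ⟨ξ, hξ, ?_⟩
    rw [hval]
    have h1 := hmin b ⟨hb.le, hbδ⟩
    have h2 : (0:ℝ) < b - 0 := by linarith
    apply div_nonneg (by linarith) h2.le
  have htk : ∀ k : ℕ, 0 < δ / (k + 2) ∧ δ / (k + 2) < δ := by
    intro k
    constructor
    · positivity
    · apply div_lt_self hδ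
      have : (0:ℝ) ≤ (k:ℝ) := Nat.cast_nonneg k
      linarith
  choose ξ hξmem hξpos using fun k : ℕ => key (δ / (k + 2)) (htk k).1 (htk k).2
  have hξ0 : Tendsto ξ atTop (𝓝 0) := by
    have hub : Tendsto (fun k : ℕ => δ / (k + 2)) atTop (𝓝 0) := by
      apply Tendsto.div_atTop (tendsto_const_nhds)
      exact tendsto_atTop_add_const_right _ 2 tendsto_natCast_atTop_atTop
    exact squeeze_zero (fun k => (hξmem k).1.le) (fun k => (hξmem k).2.le) hub
  have hξin : ∀ k, ξ k ∈ Ico (0:ℝ) δ \ {0} := by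
    intro k
    exact ⟨⟨(hξmem k).1.le, (hξmem k).2.trans (htk k).2⟩, ne_of_gt (hξmem k).1⟩
  have hξtend : Tendsto ξ atTop (𝓝[Ico (0:ℝ) δ \ {0}] 0) :=
    tendsto_nhdsWithin_of_tendsto_nhds_of_eventually_within _ hξ0
      (Eventually.of_forall hξin)
  have hslope := (hasDerivWithinAt_iff_tendsto_slope.mp hdd).comp hξtend
  refine ge_of_tendsto' hslope fun k => ?_
  have : slope φ' 0 (ξ k) = φ' (ξ k) / ξ k := by
    rw [slope_def_field]; rw [h0]; ring_nf
  simp only [Function.comp]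
  rw [this]
  exact div_nonneg (hξpos k) (hξmem k).1.le

theorem wsonc_under_wsocq {n m p l : ℕ} (f : Vec n → ℝ) (g : Fin m → Vec n → ℝ)
    (h : Fin p → Vec n → ℝ) (G H : Fin l → Vec n → ℝ)
    (hf : ContDiff ℝ 2 f) (hg : ∀ i, ContDiff ℝ 2 (g i)) (hh : ∀ j, ContDiff ℝ 2 (h j))
    (hG : ∀ k, ContDiff ℝ 2 (G k)) (hH : ∀ k, ContDiff ℝ 2 (H k))
    (xb : Vec n) (hxb : xb ∈ Feas g h G H)
    (hopt : LocallyOptimal f g h G H xb) (hS : SStationary f g h G H xb)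
    (hcq : WSOCQ g h G H xb) :
    ∀ (lam : Fin m → ℝ) (ρ : Fin p → ℝ) (μ ν : Fin l → ℝ),
      SStationarySystem f g h G H xb lam ρ μ ν →
      ∀ d ∈ CritSubspace g h G H xb,
        0 ≤ hessForm (lagr f g h G H lam ρ μ ν) xb d := by
  intro lam ρ μ ν hSys d hdcrit
  obtain ⟨hlam0, hlamg, hμ0, hν0, hgrad⟩ := hSys
  set ℓ : Vec n → ℝ := lagr f g h G H lam ρ μ ν with hℓdef
  -- smoothness of ℓ
  have hℓc : ContDiff ℝ 2 ℓ := by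
    apply ContDiff.add
    apply ContDiff.add
    apply ContDiff.add
    apply ContDiff.add
    · exact hf
    · exact ContDiff.sum fun i _ => contDiff_const.mul (hg i)
    · exact ContDiff.sum fun j _ => contDiff_const.mul (hh j)
    · exact ContDiff.sum fun k _ => contDiff_const.mul (hG k)
    · exact ContDiff.sum fun k _ => contDiff_const.mul (hH k)
  have hℓdiff : Differentiable ℝ ℓ := hℓc.differentiable (by norm_num)
  -- fderiv sum identity from the gradient identity
  have hfd : fderiv ℝ f xb + ∑ i, lam i • fderiv ℝ (g i) xb
      + ∑ j, ρ j • fderiv ℝ (h j) xb + ∑ k, μ k • fderiv ℝ (G k) xb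
      + ∑ k, ν k • fderiv ℝ (H k) xb = 0 := by
    have := congrArg (InnerProductSpace.toDual ℝ (Vec n)) hgrad
    simpa [gradient, map_add, map_sum, map_smul] using this
  -- explicit derivative of ℓ
  have hasD : ∀ x : Vec n, HasFDerivAt ℓ (fderiv ℝ f x + ∑ i, lam i • fderiv ℝ (g i) x
      + ∑ j, ρ j • fderiv ℝ (h j) x + ∑ k, μ k • fderiv ℝ (G k) x
      + ∑ k, ν k • fderiv ℝ (H k) x) x := by
    intro x
    have Hf := (hf.differentiable (by norm_num) x).hasFDerivAt
    have Hg : HasFDerivAt (fun x => ∑ i, lam i * g i x)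
        (∑ i, lam i • fderiv ℝ (g i) x) x :=
      HasFDerivAt.fun_sum fun i _ =>
        ((hg i).differentiable (by norm_num) x).hasFDerivAt.const_mul (lam i)
    have Hh : HasFDerivAt (fun x => ∑ j, ρ j * h j x)
        (∑ j, ρ j • fderiv ℝ (h j) x) x :=
      HasFDerivAt.fun_sum fun j _ =>
        ((hh j).differentiable (by norm_num) x).hasFDerivAt.const_mul (ρ j)
    have HGG : HasFDerivAt (fun x => ∑ k, μ k * G k x)
        (∑ k, μ k • fderiv ℝ (G k) x) x :=
      HasFDerivAt.fun_sum fun k _ =>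
        ((hG k).differentiable (by norm_num) x).hasFDerivAt.const_mul (μ k)
    have HHH : HasFDerivAt (fun x => ∑ k, ν k * H k x)
        (∑ k, ν k • fderiv ℝ (H k) x) x :=
      HasFDerivAt.fun_sum fun k _ =>
        ((hH k).differentiable (by norm_num) x).hasFDerivAt.const_mul (ν k)
    exact (((Hf.add Hg).add Hh).add HGG).add HHH
  have hfℓ0 : fderiv ℝ ℓ xb = 0 := by
    rw [(hasD xb).fderiv, hfd]
  -- second derivative of ℓ exists
  have hC1 : ContDiff ℝ 1 (fderiv ℝ ℓ) := hℓc.fderiv_right (by norm_num)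
  have hB : HasFDerivAt (fderiv ℝ ℓ) (fderiv ℝ (fderiv ℝ ℓ) xb) xb :=
    ((hC1.differentiable (by norm_num)) xb).hasFDerivAt
  rcases eq_or_ne d 0 with rfl | hd0
  · -- trivial case d = 0
    have : hessForm ℓ xb 0 = 0 := by
      have := (iteratedFDeriv ℝ 2 ℓ xb).map_coord_zero (m := ![(0 : Vec n), 0]) 0 rfl
      simpa [hessForm] using this
    rw [this]
  -- nontrivial case: use the arc from WSOCQ
  obtain ⟨δ, hδ, J, K, hJ, hK, ζ, ζ', ⟨hζd, hζ'd⟩, hfeas, hζ0, hζ'0, hgzero, hGzero, hHzero⟩ :=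
    hcq d hdcrit hd0
  set s : Set ℝ := Ico (0:ℝ) δ with hsdef
  have h0s : (0:ℝ) ∈ s := ⟨le_rfl, hδ⟩
  set φ : ℝ → ℝ := fun t => ℓ (ζ t) with hφdef
  set φ' : ℝ → ℝ := fun t => fderiv ℝ ℓ (ζ t) (ζ' t) with hφ'def
  have hφd : ∀ t ∈ s, HasDerivWithinAt φ (φ' t) s t := fun t ht =>
    ((hℓdiff (ζ t)).hasFDerivAt).comp_hasDerivWithinAt_of_eq t (hζd t ht) rfl
  have hφ'0 : φ' 0 = 0 := by
    simp only [hφ'def, hζ0, hζ'0, hfℓ0]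
    simp
  -- second derivative of φ at 0
  have hA : HasDerivWithinAt (fun t => fderiv ℝ ℓ (ζ t)) (fderiv ℝ (fderiv ℝ ℓ) xb d) s 0 := by
    have h1 := hζd 0 h0s
    rw [hζ'0] at h1
    exact hB.comp_hasDerivWithinAt_of_eq 0 h1 (by rw [hζ0])
  have hv : HasDerivWithinAt ζ' (derivWithin ζ' s 0) s 0 :=
    (hζ'd 0 h0s).hasDerivWithinAt
  have hφ'' : HasDerivWithinAt φ' (fderiv ℝ (fderiv ℝ ℓ) xb d d) s 0 := by
    have := hA.clm_apply hv
    rw [hζ'0, hζ0, hfℓ0] at this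
    simpa using this
  -- ℓ = f along the arc
  have hval : ∀ t ∈ s, ℓ (ζ t) = f (ζ t) := by
    intro t ht
    obtain ⟨hgf, hhf, hGH⟩ := hfeas t ht
    have h1 : ∀ i, lam i * g i (ζ t) = 0 := by
      intro i
      by_cases hi : g i xb = 0
      · rw [hgzero t ht i hi]; ring
      · have : lam i = 0 := by
          rcases mul_eq_zero.mp (hlamg i) with hz | hz
          · exact hz
          · exact absurd hz hi
        rw [this]; ring
    have h2 : ∀ j, ρ j * h j (ζ t) = 0 := fun j => by rw [hhf j]; ring
    have h3 : ∀ k, μ k * G k (ζ t) = 0 := by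
      intro k
      by_cases hGk : G k xb = 0
      · by_cases hHk : H k xb = 0
        · rw [hμ0 k (Set.mem_union_right _ ⟨hGk, hHk⟩)]; ring
        · rw [hGzero t ht k (Set.mem_union_left _ (show k ∈ IG G H xb from ⟨hGk, hHk⟩))]; ring
      · have hHk : H k xb = 0 := by
          rcases mul_eq_zero.mp (hxb.2.2 k) with hz | hz
          · exact absurd hz hGk
          · exact hz
        rw [hμ0 k (Set.mem_union_left _ ⟨hGk, hHk⟩)]; ring
    have h4 : ∀ k, ν k * H k (ζ t) = 0 := by
      intro k
      by_cases hHk : H k xb = 0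
      · by_cases hGk : G k xb = 0
        · rw [hν0 k (Set.mem_union_right _ ⟨hGk, hHk⟩)]; ring
        · rw [hHzero t ht k (Set.mem_union_left _ (show k ∈ IH G H xb from ⟨hGk, hHk⟩))]; ring
      · have hGk : G k xb = 0 := by
          rcases mul_eq_zero.mp (hxb.2.2 k) with hz | hz
          · exact hz
          · exact absurd hz hHk
        rw [hν0 k (Set.mem_union_left _ ⟨hGk, hHk⟩)]; ring
    show f (ζ t) + ∑ i, lam i * g i (ζ t) + ∑ j, ρ j * h j (ζ t)
      + ∑ k, μ k * G k (ζ t) + ∑ k, ν k * H k (ζ t) = f (ζ t)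
    rw [Finset.sum_eq_zero fun i _ => h1 i, Finset.sum_eq_zero fun j _ => h2 j,
      Finset.sum_eq_zero fun k _ => h3 k, Finset.sum_eq_zero fun k _ => h4 k]
    ring
  -- local optimality: shrink δ
  obtain ⟨ε, hε, hloc⟩ := hopt.2
  have hcont0 : Tendsto ζ (𝓝[s] 0) (𝓝 xb) := by
    have := (hζd 0 h0s).continuousWithinAt
    rwa [ContinuousWithinAt, hζ0] at this
  have hev : ∀ᶠ t in 𝓝[s] 0, ‖ζ t - xb‖ < ε := by
    filter_upwards [hcont0 (Metric.ball_mem_nhds xb hε)] with t ht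
    simp only [Set.mem_preimage, Metric.mem_ball, dist_eq_norm] at ht
    exact ht
  rw [Filter.eventually_iff, Metric.mem_nhdsWithin_iff] at hev
  obtain ⟨δ₂, hδ₂, hev⟩ := hev
  set δ₁ : ℝ := min δ δ₂ with hδ₁def
  have hδ₁ : 0 < δ₁ := lt_min hδ hδ₂
  have hsub : Ico (0:ℝ) δ₁ ⊆ s := fun t ht => ⟨ht.1, lt_of_lt_of_le ht.2 (min_le_left _ _)⟩
  have hmin : ∀ t ∈ Ico (0:ℝ) δ₁, φ 0 ≤ φ t := by
    intro t ht
    have hts : t ∈ s := hsub ht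
    have hnear : ‖ζ t - xb‖ < ε := by
      refine hev ⟨?_, hts⟩
      rw [Metric.mem_ball, Real.dist_eq, sub_zero, abs_of_nonneg ht.1]
      exact lt_of_lt_of_le ht.2 (min_le_right _ _)
    have := hloc (ζ t) (hfeas t hts) hnear
    have hv0 : ℓ xb = f xb := by
      have h00 := hval 0 h0s
      rwa [hζ0] at h00
    have hφ0 : φ 0 = f xb := by
      show ℓ (ζ 0) = f xb
      rw [hζ0]
      exact hv0
    have hφt : φ t = f (ζ t) := hval t hts
    rw [hφ0, hφt]
    exact this
  -- conclude via the key lemma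
  have hkey : 0 ≤ fderiv ℝ (fderiv ℝ ℓ) xb d d :=
    aux_second_deriv_nonneg hδ₁
      (fun t ht => (hφd t (hsub ht)).mono hsub)
      hφ'0 (hφ''.mono hsub) hmin
  have : hessForm ℓ xb d = fderiv ℝ (fderiv ℝ ℓ) xb d d := by
    rw [hessForm, iteratedFDeriv_two_apply]
    simp
  rw [this]
  exact hkey


end MPSC
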